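/- Let P be a GMMN instance whose intersection graph IG[P] contains no triangle. Then for every feasible solution N = (π_v)_{v∈P} ∈ Feas(P), the length of N satisfies ‖N‖ = Σ_{(s,t)∈P} d(s,t) − Σ_{{u,v}∈E(IG[P])} ‖π_u ∩ π_v‖. In particular, N is optimal if and only if the total length of segments shared by two M-paths is maximized. -/

import Mathlib

noncomputable section
open scoped Classical

/-- A point in the Euclidean plane. -/
abbrev Point : Type := ℝ × ℝ

/-- The Manhattan distance `d(p, q)`. -/
def manh (p q : Point) : ℝ := |p.1 - q.1| + |p.2 - q.2|

/-- The Euclidean length `‖pq‖` of the segment between `p` and `q`. -/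
def euclen (p q : Point) : ℝ := Real.sqrt ((p.1 - q.1) ^ 2 + (p.2 - q.2) ^ 2)

/-- The segment `pq` is axis-aligned. -/
def axisAligned (p q : Point) : Prop := p.1 = q.1 ∨ p.2 = q.2

/-- `z` lies in the bounding box `B(a, b)` (componentwise between `a ⊓ b` and `a ⊔ b`). -/
def inBox (a b z : Point) : Prop := a ⊓ b ≤ z ∧ z ≤ a ⊔ b

lemma euclen_comm (p q : Point) : euclen p q = euclen q p := by
  unfold euclen; ring_nf

/-- Length of an (unordered) edge. -/
def sym2Len : Sym2 Point → ℝ := Sym2.lift ⟨euclen, euclen_comm⟩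

/-- The length of a network, given by its (finite) edge set. -/
def netLength (N : Finset (Sym2 Point)) : ℝ := ∑ e ∈ N, sym2Len e

/-- A (simple) path in the plane, given by its sequence of (distinct) vertices. -/
structure GPath where
  k : ℕ
  pts : Fin (k + 1) → Point
  inj : Function.Injective pts

/-- The `i`-th edge of a path. -/
def GPath.edge (π : GPath) (i : Fin π.k) : Sym2 Point :=
  s(π.pts i.castSucc, π.pts i.succ)

/-- The edge set of a path. -/
def GPath.edges (π : GPath) : Finset (Sym2 Point) :=
  Finset.image π.edge Finset.univ

/-- The total (Euclidean) length of a path. -/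
def GPath.length (π : GPath) : ℝ :=
  ∑ i : Fin π.k, euclen (π.pts i.castSucc) (π.pts i.succ)

/-- `π` is a Manhattan path (M-path) for the pair `(s, t)`: an `s`–`t` path all of whose
edges are axis-aligned and whose total length equals the Manhattan distance `d(s, t)`. -/
def IsMPath (s t : Point) (π : GPath) : Prop :=
  π.pts 0 = s ∧ π.pts (Fin.last π.k) = t ∧
  (∀ i : Fin π.k, axisAligned (π.pts i.castSucc) (π.pts i.succ)) ∧
  π.length = manh s t

/-- A GMMN instance: a finite set of pairs of points. -/
abbrev Inst : Type := Finset (Point × Point)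

/-- The vertex set of the Hanan grid `H(P)`. -/
def hananV (P : Inst) : Finset Point :=
  ((P.image fun v => v.1.1) ∪ (P.image fun v => v.2.1)) ×ˢ
  ((P.image fun v => v.1.2) ∪ (P.image fun v => v.2.2))

/-- `{p, q}` is an edge of the Hanan grid `H(P)`: an axis-aligned segment between two distinct
grid vertices containing no third grid vertex. -/
def IsHananEdge (P : Inst) (p q : Point) : Prop :=
  p ∈ hananV P ∧ q ∈ hananV P ∧ p ≠ q ∧ axisAligned p q ∧
  ∀ z ∈ hananV P, inBox p q z → z = p ∨ z = q

/-- All edges of the path `π` are edges of the Hanan grid `H(P)`. -/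
def OnGrid (P : Inst) (π : GPath) : Prop :=
  ∀ i : Fin π.k, IsHananEdge P (π.pts i.castSucc) (π.pts i.succ)

/-- `π ∈ Π_P(u)`: an M-path for the pair `u` that is a subgraph of the Hanan grid `H(P)`. -/
def InPi (P : Inst) (u : Point × Point) (π : GPath) : Prop :=
  IsMPath u.1 u.2 π ∧ OnGrid P π

/-- The network `∪_{v ∈ P} π_v` determined by a choice of M-paths. -/
def netOf (P : Inst) (f : Point × Point → GPath) : Finset (Sym2 Point) :=
  P.biUnion fun v => (f v).edges

/-- `f` gives a feasible solution in `Feas(P)`: an M-path on the Hanan grid for each pair. -/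
def IsFeasChoice (P : Inst) (f : Point × Point → GPath) : Prop :=
  ∀ v ∈ P, InPi P v (f v)

/-- `f` gives an optimal solution in `Opt(P)`. -/
def IsOptChoice (P : Inst) (f : Point × Point → GPath) : Prop :=
  IsFeasChoice P f ∧
  ∀ g : Point × Point → GPath, IsFeasChoice P g →
    netLength (netOf P f) ≤ netLength (netOf P g)

/-- Adjacency in the intersection graph `IG[P]`: `u ≠ v` and the induced subgrids
`H(P, u)` and `H(P, v)` share an edge. -/
def IGAdj (P : Inst) (u v : Point × Point) : Prop :=
  u ≠ v ∧ ∃ p q : Point, IsHananEdge P p q ∧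
    inBox u.1 u.2 p ∧ inBox u.1 u.2 q ∧ inBox v.1 v.2 p ∧ inBox v.1 v.2 q

/-- The total length `‖π₁ ∩ π₂‖` of the segments shared by two paths. -/
def sharedLen (π₁ π₂ : GPath) : ℝ := netLength (π₁.edges ∩ π₂.edges)

/-- A pair `(p, q)` with `p_x ≤ q_x` is regular if `p_y ≤ q_y`. -/
def Regular (u : Point × Point) : Prop := u.1.1 ≤ u.2.1 ∧ u.1.2 ≤ u.2.2

/-- A pair `(p, q)` with `p_x ≤ q_x` is flipped if `p_y ≥ q_y`. -/
def Flipped (u : Point × Point) : Prop := u.1.1 ≤ u.2.1 ∧ u.2.2 ≤ u.1.2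

/-- The intersection graph `IG[P]` as a simple graph on the pairs of `P`. -/
def IG (P : Inst) : SimpleGraph {v : Point × Point // v ∈ P} where
  Adj u v := IGAdj P u.1 v.1
  symm := by
    constructor
    rintro u v ⟨hne, p, q, he, h1, h2, h3, h4⟩
    exact ⟨hne.symm, p, q, he, h3, h4, h1, h2⟩
  loopless := ⟨fun u h => h.1 rfl⟩


lemma euclen_eq_manh {p q : Point} (h : axisAligned p q) : euclen p q = manh p q := by
  rcases h with h | h <;> simp [euclen, manh, h, Real.sqrt_sq_eq_abs]

lemma GPath.edge_injective (π : GPath) : Function.Injective π.edge := by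
  intro i j hij
  rw [GPath.edge, GPath.edge, Sym2.eq_iff] at hij
  rcases hij with ⟨h1, h2⟩ | ⟨h1, h2⟩
  · exact Fin.castSucc_injective _ (π.inj h1)
  · have e1 : i.castSucc = j.succ := π.inj h1
    have e2 : i.succ = j.castSucc := π.inj h2
    have := congrArg Fin.val e1
    have := congrArg Fin.val e2
    simp at *
    omega

lemma GPath.netLength_edges (π : GPath) : netLength π.edges = π.length := by
  rw [netLength, GPath.edges, Finset.sum_image (fun a _ b _ h => π.edge_injective h)]
  rfl
lemma interval_aux {x0 xk a : ℝ} (h1 : |a - x0| ≤ |xk - x0|) (h2 : |xk - a| ≤ |xk - x0|) :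
    x0 ⊓ xk ≤ a ∧ a ≤ x0 ⊔ xk := by
  have l1 : a - x0 ≤ |a - x0| := le_abs_self _
  have l1' : x0 - a ≤ |a - x0| := by rw [abs_sub_comm]; exact le_abs_self _
  have l2 : xk - a ≤ |xk - a| := le_abs_self _
  have l2' : a - xk ≤ |xk - a| := by rw [abs_sub_comm]; exact le_abs_self _
  rcases le_total x0 xk with h | h
  · have habs : |xk - x0| = xk - x0 := abs_of_nonneg (by linarith)
    rw [habs] at h1 h2
    exact ⟨le_trans inf_le_left (by linarith), le_trans (by linarith : a ≤ xk) le_sup_right⟩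
  · have habs : |xk - x0| = x0 - xk := by rw [abs_of_nonpos (by linarith : xk - x0 ≤ 0)]; ring
    rw [habs] at h1 h2
    exact ⟨le_trans inf_le_right (by linarith), le_trans (by linarith : a ≤ x0) le_sup_left⟩

lemma mpath_pts_mem_box {s t : Point} {π : GPath} (h : IsMPath s t π)
    (j : Fin (π.k + 1)) : inBox s t (π.pts j) := by
  obtain ⟨h0, hl, hax, hlen⟩ := h
  revert j
  set k := π.k with hk
  intro j
  set X : ℕ → ℝ := fun n => (π.pts ⟨min n k, Nat.lt_succ_of_le (min_le_right n k)⟩).1 with hX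
  set Y : ℕ → ℝ := fun n => (π.pts ⟨min n k, Nat.lt_succ_of_le (min_le_right n k)⟩).2 with hY
  have hpt : ∀ n (hn : n ≤ k), (⟨min n k, Nat.lt_succ_of_le (min_le_right n k)⟩ : Fin (k+1)) = ⟨n, Nat.lt_succ_of_le hn⟩ := by
    intro n hn; exact Fin.ext (min_eq_left hn)
  have hX0 : X 0 = s.1 := by
    rw [hX]; simp only; rw [hpt 0 (Nat.zero_le k)]
    rw [show (⟨0, Nat.lt_succ_of_le (Nat.zero_le k)⟩ : Fin (k+1)) = 0 from rfl, h0]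
  have hY0 : Y 0 = s.2 := by
    rw [hY]; simp only; rw [hpt 0 (Nat.zero_le k)]
    rw [show (⟨0, Nat.lt_succ_of_le (Nat.zero_le k)⟩ : Fin (k+1)) = 0 from rfl, h0]
  have hlast : (⟨min k k, Nat.lt_succ_of_le (min_le_right k k)⟩ : Fin (k+1)) = Fin.last k := by
    exact Fin.ext (by simp [Fin.last])
  have hXk : X k = t.1 := by rw [hX]; simp only; rw [hlast, hl]
  have hYk : Y k = t.2 := by rw [hY]; simp only; rw [hlast, hl]
  -- edge lengths
  have hedge : ∀ i : Fin k, euclen (π.pts i.castSucc) (π.pts i.succ)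
      = |X (i.1+1) - X i.1| + |Y (i.1+1) - Y i.1| := by
    intro i
    have hc : i.castSucc = (⟨min i.1 k, Nat.lt_succ_of_le (min_le_right i.1 k)⟩ : Fin (k+1)) :=
      Fin.ext (by simp [min_eq_left (Nat.le_of_lt i.2)])
    have hs : i.succ = (⟨min (i.1+1) k, Nat.lt_succ_of_le (min_le_right _ k)⟩ : Fin (k+1)) :=
      Fin.ext (by simp [min_eq_left (Nat.succ_le_of_lt i.2)])
    rw [euclen_eq_manh (hax i), manh, hc, hs, hX, hY]
    simp only
    rw [abs_sub_comm ((π.pts _).1), abs_sub_comm ((π.pts _).2)]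
  have hsum : ∑ i ∈ Finset.range k, (|X (i+1) - X i| + |Y (i+1) - Y i|)
      = |X k - X 0| + |Y k - Y 0| := by
    rw [← Fin.sum_univ_eq_sum_range (fun i => |X (i+1) - X i| + |Y (i+1) - Y i|) k]
    rw [show (∑ i : Fin k, (|X (i.1+1) - X i.1| + |Y (i.1+1) - Y i.1|)) = π.length from
      (Finset.sum_congr rfl fun i _ => (hedge i).symm)]
    rw [hlen, manh, hX0, hY0, hXk, hYk, abs_sub_comm s.1 t.1, abs_sub_comm s.2 t.2]
  have hteleX : ∀ m, ∑ i ∈ Finset.range m, (X (i+1) - X i) = X m - X 0 :=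
    fun m => Finset.sum_range_sub X m
  have hteleY : ∀ m, ∑ i ∈ Finset.range m, (Y (i+1) - Y i) = Y m - Y 0 :=
    fun m => Finset.sum_range_sub Y m
  have hAge : |X k - X 0| ≤ ∑ i ∈ Finset.range k, |X (i+1) - X i| := by
    rw [← hteleX k]; exact Finset.abs_sum_le_sum_abs _ _
  have hBge : |Y k - Y 0| ≤ ∑ i ∈ Finset.range k, |Y (i+1) - Y i| := by
    rw [← hteleY k]; exact Finset.abs_sum_le_sum_abs _ _
  have hsplit : ∑ i ∈ Finset.range k, (|X (i+1) - X i| + |Y (i+1) - Y i|)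
      = (∑ i ∈ Finset.range k, |X (i+1) - X i|) + (∑ i ∈ Finset.range k, |Y (i+1) - Y i|) :=
    Finset.sum_add_distrib
  have hAeq : ∑ i ∈ Finset.range k, |X (i+1) - X i| = |X k - X 0| := by linarith [hsum, hsplit, hAge, hBge]
  have hBeq : ∑ i ∈ Finset.range k, |Y (i+1) - Y i| = |Y k - Y 0| := by linarith [hsum, hsplit, hAge, hBge]
  -- partial sums
  set m := j.1 with hm
  have hmk : m ≤ k := Nat.lt_succ_iff.mp j.2
  have key : ∀ (Z : ℕ → ℝ), (∑ i ∈ Finset.range k, |Z (i+1) - Z i| = |Z k - Z 0|) →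
      (∀ n, ∑ i ∈ Finset.range n, (Z (i+1) - Z i) = Z n - Z 0) →
      |Z m - Z 0| ≤ |Z k - Z 0| ∧ |Z k - Z m| ≤ |Z k - Z 0| := by
    intro Z hZeq hZtele
    have hp1 : |Z m - Z 0| ≤ ∑ i ∈ Finset.range m, |Z (i+1) - Z i| := by
      rw [← hZtele m]; exact Finset.abs_sum_le_sum_abs _ _
    have hp2 : |Z k - Z m| ≤ ∑ i ∈ Finset.Ico m k, |Z (i+1) - Z i| := by
      have : ∑ i ∈ Finset.Ico m k, (Z (i+1) - Z i) = Z k - Z m := by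
        rw [Finset.sum_Ico_eq_sub _ hmk, hZtele k, hZtele m]; ring
      rw [← this]; exact Finset.abs_sum_le_sum_abs _ _
    have hcons : (∑ i ∈ Finset.range m, |Z (i+1) - Z i|) + ∑ i ∈ Finset.Ico m k, |Z (i+1) - Z i|
        = ∑ i ∈ Finset.range k, |Z (i+1) - Z i| := by
      rw [Finset.range_eq_Ico, Finset.range_eq_Ico]
      exact Finset.sum_Ico_consecutive _ (Nat.zero_le m) hmk
    have h2 : (0:ℝ) ≤ |Z m - Z 0| := abs_nonneg _
    have h3 : (0:ℝ) ≤ |Z k - Z m| := abs_nonneg _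
    constructor <;> linarith [hZeq, hp1, hp2, hcons]
  obtain ⟨hx1, hx2⟩ := key X hAeq hteleX
  obtain ⟨hy1, hy2⟩ := key Y hBeq hteleY
  have hXm : X m = (π.pts j).1 := by
    rw [hX]; simp only; rw [hpt m hmk]
  have hYm : Y m = (π.pts j).2 := by
    rw [hY]; simp only; rw [hpt m hmk]
  rw [hX0, hXk] at hx1 hx2
  rw [hY0, hYk] at hy1 hy2
  rw [hXm] at hx1 hx2
  rw [hYm] at hy1 hy2
  obtain ⟨ix1, ix2⟩ := interval_aux hx1 hx2
  obtain ⟨iy1, iy2⟩ := interval_aux hy1 hy2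
  constructor
  · rw [Prod.le_def, Prod.fst_inf, Prod.snd_inf]; exact ⟨ix1, iy1⟩
  · rw [Prod.le_def, Prod.fst_sup, Prod.snd_sup]; exact ⟨ix2, iy2⟩
lemma edge_mem_info {P : Inst} {u : Point × Point} {π : GPath} (hπ : InPi P u π)
    {e : Sym2 Point} (he : e ∈ π.edges) :
    ∃ p q : Point, e = s(p, q) ∧ IsHananEdge P p q ∧ inBox u.1 u.2 p ∧ inBox u.1 u.2 q := by
  obtain ⟨i, -, rfl⟩ := Finset.mem_image.mp he
  exact ⟨_, _, rfl, hπ.2 i, mpath_pts_mem_box hπ.1 _, mpath_pts_mem_box hπ.1 _⟩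

lemma adj_of_shared {P : Inst} {f : Point × Point → GPath} (hf : IsFeasChoice P f)
    {u v : Point × Point} (hu : u ∈ P) (hv : v ∈ P) (hne : u ≠ v)
    {e : Sym2 Point} (heu : e ∈ (f u).edges) (hev : e ∈ (f v).edges) : IGAdj P u v := by
  obtain ⟨p, q, rfl, hh, hp, hq⟩ := edge_mem_info (hf u hu) heu
  obtain ⟨p', q', heq, hh', hp', hq'⟩ := edge_mem_info (hf v hv) hev
  rw [Sym2.eq_iff] at heq
  rcases heq with ⟨h1, h2⟩ | ⟨h1, h2⟩
  · subst h1; subst h2; exact ⟨hne, p, q, hh, hp, hq, hp', hq'⟩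
  · subst h1; subst h2; exact ⟨hne, p, q, hh, hp, hq, hq', hp'⟩
lemma length_formula (P : Inst)
    (htf : ∀ u ∈ P, ∀ v ∈ P, ∀ w ∈ P,
      IGAdj P u v → IGAdj P v w → IGAdj P u w → False)
    (f : Point × Point → GPath) (hf : IsFeasChoice P f) :
    netLength (netOf P f) =
      (∑ v ∈ P, manh v.1 v.2) -
        (1 / 2) * ∑ u ∈ P, ∑ v ∈ P,
          (if IGAdj P u v then sharedLen (f u) (f v) else 0) := by
  classical
  set N := netOf P f with hN
  set E : (Point × Point) → Finset (Sym2 Point) := fun v => (f v).edges with hE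
  have hsub : ∀ v ∈ P, E v ⊆ N := fun v hv => Finset.subset_biUnion_of_mem _ hv
  set S : Sym2 Point → Finset (Point × Point) := fun e => P.filter (fun v => e ∈ E v) with hS
  have hm1 : ∀ e ∈ N, 1 ≤ (S e).card := by
    intro e he
    obtain ⟨v, hv, hev⟩ := Finset.mem_biUnion.mp he
    exact Finset.card_pos.mpr ⟨v, Finset.mem_filter.mpr ⟨hv, hev⟩⟩
  have hSmem : ∀ e u, u ∈ S e ↔ u ∈ P ∧ e ∈ E u := by
    intro e u; rw [hS]; exact Finset.mem_filter
  have hm2 : ∀ e ∈ N, (S e).card ≤ 2 := by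
    intro e he
    by_contra hlt
    push_neg at hlt
    obtain ⟨u, hu, v, hv, w, hw, huv, huw, hvw⟩ := Finset.two_lt_card.mp hlt
    rw [hSmem] at hu hv hw
    exact htf u hu.1 v hv.1 w hw.1
      (adj_of_shared hf hu.1 hv.1 huv hu.2 hv.2)
      (adj_of_shared hf hv.1 hw.1 hvw hv.2 hw.2)
      (adj_of_shared hf hu.1 hw.1 huw hu.2 hw.2)
  -- first sum
  have key1 : ∀ v ∈ P, netLength (E v) = ∑ e ∈ N, (if e ∈ E v then sym2Len e else 0) := by
    intro v hv
    rw [netLength, Finset.sum_ite_mem, Finset.inter_eq_right.mpr (hsub v hv)]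
  have hC : (∑ v ∈ P, manh v.1 v.2) = ∑ e ∈ N, ((S e).card : ℝ) * sym2Len e := by
    have step1 : ∀ v ∈ P, manh v.1 v.2 = netLength (E v) := by
      intro v hv
      rw [hE]; simp only
      rw [GPath.netLength_edges, (hf v hv).1.2.2.2]
    calc (∑ v ∈ P, manh v.1 v.2) = ∑ v ∈ P, netLength (E v) := Finset.sum_congr rfl step1
      _ = ∑ v ∈ P, ∑ e ∈ N, (if e ∈ E v then sym2Len e else 0) := Finset.sum_congr rfl key1
      _ = ∑ e ∈ N, ∑ v ∈ P, (if e ∈ E v then sym2Len e else 0) := Finset.sum_comm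
      _ = ∑ e ∈ N, ((S e).card : ℝ) * sym2Len e := by
          refine Finset.sum_congr rfl fun e _ => ?_
          rw [Finset.sum_ite, Finset.sum_const, Finset.sum_const_zero, add_zero,
            nsmul_eq_mul, hS]
  -- double sum
  have hshared : ∀ u ∈ P, ∀ v ∈ P,
      (if IGAdj P u v then sharedLen (f u) (f v) else 0)
        = ∑ e ∈ N, (if u ≠ v ∧ e ∈ E u ∧ e ∈ E v then sym2Len e else 0) := by
    intro u hu v hv
    by_cases huv : u = v
    · subst huv
      simp [IGAdj]
    · by_cases hadj : IGAdj P u v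
      · rw [if_pos hadj, sharedLen, netLength]
        have : ∀ e ∈ N, (if u ≠ v ∧ e ∈ E u ∧ e ∈ E v then sym2Len e else 0)
            = (if e ∈ E u ∩ E v then sym2Len e else 0) := by
          intro e _
          congr 1
          simp only [eq_iff_iff, Finset.mem_inter]
          constructor
          · rintro ⟨-, h⟩; exact h
          · intro h; exact ⟨huv, h⟩
        rw [Finset.sum_congr rfl this, Finset.sum_ite_mem,
          Finset.inter_eq_right.mpr (fun e he => hsub u hu (Finset.mem_inter.mp he).1)]
      · rw [if_neg hadj]
        symm
        apply Finset.sum_eq_zero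
        intro e _
        rw [if_neg]
        rintro ⟨hne, heu, hev⟩
        exact hadj (adj_of_shared hf hu hv hne heu hev)
  have hD : (∑ u ∈ P, ∑ v ∈ P, (if IGAdj P u v then sharedLen (f u) (f v) else 0))
      = ∑ e ∈ N, ((S e).card * ((S e).card - 1) : ℕ) • sym2Len e := by
    calc (∑ u ∈ P, ∑ v ∈ P, (if IGAdj P u v then sharedLen (f u) (f v) else 0))
        = ∑ u ∈ P, ∑ v ∈ P, ∑ e ∈ N, (if u ≠ v ∧ e ∈ E u ∧ e ∈ E v then sym2Len e else 0) := by
          refine Finset.sum_congr rfl fun u hu => Finset.sum_congr rfl fun v hv => ?_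
          exact hshared u hu v hv
      _ = ∑ u ∈ P, ∑ e ∈ N, ∑ v ∈ P, (if u ≠ v ∧ e ∈ E u ∧ e ∈ E v then sym2Len e else 0) :=
          Finset.sum_congr rfl fun u _ => Finset.sum_comm
      _ = ∑ e ∈ N, ∑ u ∈ P, ∑ v ∈ P, (if u ≠ v ∧ e ∈ E u ∧ e ∈ E v then sym2Len e else 0) :=
          Finset.sum_comm
      _ = ∑ e ∈ N, ((S e).card * ((S e).card - 1) : ℕ) • sym2Len e := by
          refine Finset.sum_congr rfl fun e he => ?_
          have inner : ∀ u ∈ P, (∑ v ∈ P, (if u ≠ v ∧ e ∈ E u ∧ e ∈ E v then sym2Len e else 0))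
              = (if e ∈ E u then (((S e).erase u).card : ℕ) • sym2Len e else 0) := by
            intro u hu
            by_cases heu : e ∈ E u
            · rw [if_pos heu, Finset.sum_ite, Finset.sum_const, Finset.sum_const_zero, add_zero]
              congr 2
              ext v
              rw [Finset.mem_filter, Finset.mem_erase, hSmem]
              constructor
              · rintro ⟨hvP, hne, -, hev⟩; exact ⟨Ne.symm hne, hvP, hev⟩
              · rintro ⟨hne, hvP, hev⟩; exact ⟨hvP, Ne.symm hne, heu, hev⟩
            · rw [if_neg heu]
              apply Finset.sum_eq_zero
              intro v _
              rw [if_neg]; rintro ⟨-, h, -⟩; exact heu h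
          rw [Finset.sum_congr rfl inner, Finset.sum_ite, Finset.sum_const,
            smul_zero, add_zero]
          have hfilter : P.filter (fun u => e ∈ E u) = S e := rfl
          rw [hfilter]
          have hcard : ∀ u ∈ S e, (((S e).erase u).card : ℕ) • sym2Len e
              = (((S e).card - 1 : ℕ)) • sym2Len e := by
            intro u hu
            rw [Finset.card_erase_of_mem hu]
          rw [Finset.sum_congr rfl hcard, Finset.sum_const, smul_smul]
  -- combine
  have hfinal : ∀ e ∈ N, sym2Len e
      = ((S e).card : ℝ) * sym2Len e
        - (1/2) * (((S e).card * ((S e).card - 1) : ℕ) • sym2Len e) := by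
    intro e he
    have h1 := hm1 e he
    have h2 := hm2 e he
    interval_cases h : (S e).card <;> (rw [h] at *; push_cast; ring)
  rw [hC, hD, Finset.mul_sum, ← Finset.sum_sub_distrib, netLength]
  exact Finset.sum_congr rfl hfinal

/-- If `IG[P]` is triangle-free, then the length of any feasible solution `N = (π_v)_{v ∈ P}`
equals `Σ_{(s,t) ∈ P} d(s,t)` minus the total length of segments shared by two M-paths (each
unordered adjacent pair counted once, whence the factor `1/2` on the ordered double sum).
In particular, `N` is optimal iff the total shared length is maximized. -/
theorem triangle_free_length_formula (P : Inst)
    (htf : ∀ u ∈ P, ∀ v ∈ P, ∀ w ∈ P,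
      IGAdj P u v → IGAdj P v w → IGAdj P u w → False)
    (f : Point × Point → GPath) (hf : IsFeasChoice P f) :
    netLength (netOf P f) =
      (∑ v ∈ P, manh v.1 v.2) -
        (1 / 2) * ∑ u ∈ P, ∑ v ∈ P,
          (if IGAdj P u v then sharedLen (f u) (f v) else 0) ∧
    (IsOptChoice P f ↔ ∀ g : Point × Point → GPath, IsFeasChoice P g →
      (∑ u ∈ P, ∑ v ∈ P, (if IGAdj P u v then sharedLen (g u) (g v) else 0)) ≤
      (∑ u ∈ P, ∑ v ∈ P, (if IGAdj P u v then sharedLen (f u) (f v) else 0))) := by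
  refine ⟨length_formula P htf f hf, ?_, ?_⟩
  · intro hopt g hg
    have h1 := length_formula P htf f hf
    have h2 := length_formula P htf g hg
    have h3 := hopt.2 g hg
    linarith
  · intro h
    refine ⟨hf, fun g hg => ?_⟩
    have h1 := length_formula P htf f hf
    have h2 := length_formula P htf g hg
    have h3 := h g hg
    linarith

end
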